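/- Let λ, μ ∈ ℝ with λ < 0 < μ. Let s : ℝ × ℝ → ℝ and z : ℝ × ℝ → ℝ be continuously differentiable functions satisfying s(λx, z(x,X)) + s(λX, z(x,X)) = 0 for all (x,X) ∈ ℝ², with z(1,0) = 1 and ∂₁z(1,0) = μ, and suppose ∂₁s(a,b) > 0 for all (a,b) ∈ ℝ². Then ∂₂z(1,0) > 0. -/

import Mathlib

noncomputable section

set_option maxHeartbeats 2000000

/-- The key intermediate positivity claim in Lemma 4.1 of the paper: under the defining
equation `s(λx, z(x,X)) + s(λX, z(x,X)) = 0` of the midpoint function `z`, the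
normalizations `z(1,0) = 1` and `∂₁z(1,0) = μ`, and the negative twist condition
`∂₁s > 0`, with `λ < 0 < μ`, one has `∂₂z(1,0) > 0`.
Here `∂₁f(a,b) = fderiv ℝ f (a,b) (1,0)` and `∂₂f(a,b) = fderiv ℝ f (a,b) (0,1)`. -/
theorem midpoint_second_partial_pos
    (lam mu : ℝ) (hlam : lam < 0) (hmu : 0 < mu)
    (s z : ℝ × ℝ → ℝ) (hs : ContDiff ℝ 1 s) (hz : ContDiff ℝ 1 z)
    (hmid : ∀ x X : ℝ, s (lam * x, z (x, X)) + s (lam * X, z (x, X)) = 0)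
    (hz10 : z (1, 0) = 1)
    (hz1 : fderiv ℝ z (1, 0) (1, 0) = mu)
    (hs1pos : ∀ p : ℝ × ℝ, 0 < fderiv ℝ s p (1, 0)) :
    0 < fderiv ℝ z (1, 0) (0, 1) := by
  have hzd : HasFDerivAt z (fderiv ℝ z (1, 0)) (1, 0) :=
    (hz.differentiable one_ne_zero (1, 0)).hasFDerivAt
  set u := fderiv ℝ z (1, 0) with hu
  set D1 := fderiv ℝ s (lam, 1) with hD1
  set D2 := fderiv ℝ s (0, 1) with hD2
  -- derivative of p ↦ (lam * p.1, z p)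
  have hf1 : HasFDerivAt (fun p : ℝ × ℝ => (lam * p.1, z p))
      ((lam • ContinuousLinearMap.fst ℝ ℝ ℝ).prod u) (1, 0) :=
    (hasFDerivAt_fst.const_mul lam).prodMk hzd
  have hf2 : HasFDerivAt (fun p : ℝ × ℝ => (lam * p.2, z p))
      ((lam • ContinuousLinearMap.snd ℝ ℝ ℝ).prod u) (1, 0) :=
    (hasFDerivAt_snd.const_mul lam).prodMk hzd
  have hs1 : HasFDerivAt s D1 (lam * 1, z (1, 0)) := by
    rw [hz10]; simp only [mul_one]
    exact (hs.differentiable one_ne_zero _).hasFDerivAt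
  have hs2 : HasFDerivAt s D2 (lam * 0, z (1, 0)) := by
    rw [hz10]; simp only [mul_zero]
    exact (hs.differentiable one_ne_zero _).hasFDerivAt
  have hc1 : HasFDerivAt (fun p : ℝ × ℝ => s (lam * p.1, z p))
      (D1.comp ((lam • ContinuousLinearMap.fst ℝ ℝ ℝ).prod u)) (1, 0) :=
    hs1.comp (1, 0) hf1
  have hc2 : HasFDerivAt (fun p : ℝ × ℝ => s (lam * p.2, z p))
      (D2.comp ((lam • ContinuousLinearMap.snd ℝ ℝ ℝ).prod u)) (1, 0) :=
    hs2.comp (1, 0) hf2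
  have hF : HasFDerivAt (fun p : ℝ × ℝ => s (lam * p.1, z p) + s (lam * p.2, z p))
      (D1.comp ((lam • ContinuousLinearMap.fst ℝ ℝ ℝ).prod u)
        + D2.comp ((lam • ContinuousLinearMap.snd ℝ ℝ ℝ).prod u)) (1, 0) := hc1.add hc2
  have hFconst : (fun p : ℝ × ℝ => s (lam * p.1, z p) + s (lam * p.2, z p))
      = fun _ : ℝ × ℝ => (0 : ℝ) := funext fun p => hmid p.1 p.2
  rw [hFconst] at hF
  have heq : D1.comp ((lam • ContinuousLinearMap.fst ℝ ℝ ℝ).prod u)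
      + D2.comp ((lam • ContinuousLinearMap.snd ℝ ℝ ℝ).prod u) = 0 :=
    hF.unique (hasFDerivAt_const 0 _)
  have hsplit : ∀ (D : ℝ × ℝ →L[ℝ] ℝ) (a b : ℝ), D (a, b) = a * D (1, 0) + b * D (0, 1) := by
    intro D a b
    have h : ((a, b) : ℝ × ℝ) = a • ((1, 0) : ℝ × ℝ) + b • ((0, 1) : ℝ × ℝ) := by
      simp [Prod.ext_iff]
    rw [h, map_add, map_smul, map_smul, smul_eq_mul, smul_eq_mul]
  have e1 : (D1.comp ((lam • ContinuousLinearMap.fst ℝ ℝ ℝ).prod u)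
      + D2.comp ((lam • ContinuousLinearMap.snd ℝ ℝ ℝ).prod u)) ((1 : ℝ), (0 : ℝ)) = 0 := by
    rw [heq]; rfl
  have e2 : (D1.comp ((lam • ContinuousLinearMap.fst ℝ ℝ ℝ).prod u)
      + D2.comp ((lam • ContinuousLinearMap.snd ℝ ℝ ℝ).prod u)) ((0 : ℝ), (1 : ℝ)) = 0 := by
    rw [heq]; rfl
  simp only [ContinuousLinearMap.add_apply, ContinuousLinearMap.comp_apply,
    ContinuousLinearMap.prod_apply, ContinuousLinearMap.smul_apply,
    ContinuousLinearMap.coe_fst', ContinuousLinearMap.coe_snd', smul_eq_mul,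
    mul_one, mul_zero] at e1 e2
  rw [hz1, hsplit D1 lam mu, hsplit D2 0 mu] at e1
  rw [hsplit D1 0 (u (0, 1)), hsplit D2 lam (u (0, 1))] at e2
  have hA := hs1pos (lam, 1)
  have hA' := hs1pos ((0 : ℝ), (1 : ℝ))
  rw [← hD1] at hA
  rw [← hD2] at hA'
  have hbb : 0 < D1 (0, 1) + D2 (0, 1) := by nlinarith
  nlinarith [mul_pos hbb hA']
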